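/- Let 1 < r ≤ 2. Then the function H(z) = (1 - (1 - 1/(rz))^r)^{-1} (principal branch) is well-defined, analytic, and injective on the open upper half-plane ℂ₊. -/
import Mathlib


open Complex

open Real in
lemma aux_wim {r : ℝ} (hr : 0 < r) {z : ℂ} (hz : 0 < z.im) :
    0 < (1 - 1 / ((r : ℂ) * z)).im := by
  have hz0 : z ≠ 0 := fun h => by simp [h] at hz
  have hrz : (r : ℂ) * z ≠ 0 := mul_ne_zero (by exact_mod_cast hr.ne') hz0
  have h2 : (1 - 1 / ((r : ℂ) * z)).im = ((r:ℂ)*z).im / Complex.normSq ((r:ℂ)*z) := by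
    rw [sub_im, one_im, one_div, Complex.inv_im]; ring
  have him : ((r:ℂ)*z).im = r * z.im := by simp [Complex.mul_im]
  rw [h2, him]
  exact div_pos (mul_pos hr hz) (Complex.normSq_pos.2 hrz)

open Real in
lemma aux_arg {w : ℂ} (hw : 0 < w.im) : 0 < arg w ∧ arg w < π := by
  constructor
  · rcases lt_or_eq_of_le (Complex.arg_nonneg_iff.2 hw.le) with h | h
    · exact h
    · exact absurd (Complex.arg_eq_zero_iff.1 h.symm).2 hw.ne'
  · exact Complex.arg_lt_pi_iff.2 (Or.inr hw.ne')

lemma aux_im_eq {r : ℝ} (w : ℂ) : (Complex.log w * (r:ℂ)).im = r * arg w := by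
  simp [Complex.mul_im, Complex.log_im, mul_comm]

open Real in
lemma aux_ne {r : ℝ} (hr1 : 1 < r) (hr2 : r ≤ 2) {w : ℂ} (hw : 0 < w.im) :
    w ^ (r : ℂ) ≠ 1 := by
  have hw0 : w ≠ 0 := fun h => by simp [h] at hw
  obtain ⟨ha1, ha2⟩ := aux_arg hw
  rw [Complex.cpow_def_of_ne_zero hw0]
  intro h
  obtain ⟨n, hn⟩ := Complex.exp_eq_one_iff.1 h
  have him2 : ((n:ℂ) * (2*(π:ℝ)*Complex.I)).im = n * (2*π) := by
    simp [Complex.mul_im]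
  have heq : r * arg w = n * (2*π) := by
    rw [← aux_im_eq (r := r) w, ← him2, hn]
  have hpos : 0 < r * arg w := mul_pos (by linarith) ha1
  have hlt : r * arg w < 2 * π := by nlinarith [Real.pi_pos]
  have h0 : (0:ℤ) < n := by
    have : (0:ℝ) < n := by nlinarith [Real.pi_pos]
    exact_mod_cast this
  have h1 : (n:ℤ) < 1 := by
    have : (n:ℝ) < 1 := by nlinarith [Real.pi_pos]
    exact_mod_cast this
  omega

open Real in
lemma aux_inj {r : ℝ} (hr1 : 1 < r) (hr2 : r ≤ 2) {w₁ w₂ : ℂ}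
    (h1 : 0 < w₁.im) (h2 : 0 < w₂.im) (h : w₁ ^ (r:ℂ) = w₂ ^ (r:ℂ)) : w₁ = w₂ := by
  have hw1 : w₁ ≠ 0 := fun h => by simp [h] at h1
  have hw2 : w₂ ≠ 0 := fun h => by simp [h] at h2
  obtain ⟨ha1, ha2⟩ := aux_arg h1
  obtain ⟨hb1, hb2⟩ := aux_arg h2
  rw [Complex.cpow_def_of_ne_zero hw1, Complex.cpow_def_of_ne_zero hw2] at h
  obtain ⟨n, hn⟩ := Complex.exp_eq_exp_iff_exists_int.1 h
  have heq : r * arg w₁ = r * arg w₂ + n * (2*π) := by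
    have := congrArg Complex.im hn
    rw [Complex.add_im, aux_im_eq (r := r) w₁, aux_im_eq (r := r) w₂] at this
    have him2 : ((n:ℂ) * (2*(π:ℝ)*Complex.I)).im = n * (2*π) := by
      simp [Complex.mul_im]
    rw [him2] at this
    exact this
  have hn0 : n = 0 := by
    have hp1 : 0 < r * arg w₁ := mul_pos (by linarith) ha1
    have hp2 : 0 < r * arg w₂ := mul_pos (by linarith) hb1
    have hl1 : r * arg w₁ < 2 * π := by nlinarith [Real.pi_pos]
    have hl2 : r * arg w₂ < 2 * π := by nlinarith [Real.pi_pos]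
    have hgt : (-1:ℝ) < n := by nlinarith [Real.pi_pos]
    have hlt : (n:ℝ) < 1 := by nlinarith [Real.pi_pos]
    have h1' : (-1:ℤ) < n := by exact_mod_cast hgt
    have h2' : (n:ℤ) < 1 := by exact_mod_cast hlt
    omega
  rw [hn0] at hn
  simp only [Int.cast_zero, zero_mul, add_zero] at hn
  have hr0 : (r:ℂ) ≠ 0 := by
    exact_mod_cast (show (0:ℝ) < r by linarith).ne'
  have hlog : Complex.log w₁ = Complex.log w₂ := mul_right_cancel₀ hr0 hn
  rw [← Complex.exp_log hw1, ← Complex.exp_log hw2, hlog]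

/-- for real `1 < r ≤ 2`, the function
`H(z) = (1 - (1 - 1/(rz))^r)⁻¹` (principal branch) is well defined (nonvanishing
denominator), analytic and injective on the open upper half-plane. -/
theorem stmt12 (r : ℝ) (hr1 : 1 < r) (hr2 : r ≤ 2)
    (H : ℂ → ℂ)
    (hH : ∀ z : ℂ, H z = (1 - (1 - 1 / ((r : ℂ) * z)) ^ ((r : ℂ)))⁻¹) :
    (∀ z : ℂ, 0 < z.im → 1 - (1 - 1 / ((r : ℂ) * z)) ^ ((r : ℂ)) ≠ 0) ∧
    AnalyticOn ℂ H {z : ℂ | 0 < z.im} ∧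
    Set.InjOn H {z : ℂ | 0 < z.im} := by
  have hr0 : (0:ℝ) < r := by linarith
  have hne : ∀ z : ℂ, 0 < z.im → 1 - (1 - 1 / ((r : ℂ) * z)) ^ ((r : ℂ)) ≠ 0 := by
    intro z hz h
    have := aux_ne hr1 hr2 (aux_wim hr0 hz)
    exact this (by linear_combination -h)
  refine ⟨hne, ?_, ?_⟩
  · have hopen : IsOpen {z : ℂ | 0 < z.im} := isOpen_lt continuous_const Complex.continuous_im
    have hdiff : DifferentiableOn ℂ H {z : ℂ | 0 < z.im} := by
      intro z hz
      have hz' : 0 < z.im := hz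
      have hz0 : z ≠ 0 := fun h => by simp [h] at hz'
      have hrz : (r : ℂ) * z ≠ 0 := mul_ne_zero (by exact_mod_cast hr0.ne') hz0
      have h1 : DifferentiableAt ℂ (fun z : ℂ => 1 - 1 / ((r:ℂ)*z)) z :=
        (differentiableAt_const 1).sub
          ((differentiableAt_const 1).div ((differentiableAt_const _).mul differentiableAt_id) hrz)
      have hslit : (1 - 1 / ((r:ℂ)*z)) ∈ Complex.slitPlane :=
        Complex.mem_slitPlane_iff.2 (Or.inr (aux_wim hr0 hz').ne')
      have h2 : DifferentiableAt ℂ (fun z : ℂ => (1 - 1 / ((r:ℂ)*z)) ^ ((r:ℂ))) z :=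
        h1.cpow (differentiableAt_const _) hslit
      have h3 : DifferentiableAt ℂ (fun z : ℂ => (1 - (1 - 1 / ((r:ℂ)*z)) ^ ((r:ℂ)))⁻¹) z :=
        ((differentiableAt_const 1).sub h2).inv (hne z hz')
      have hfun : H = fun z : ℂ => (1 - (1 - 1 / ((r:ℂ)*z)) ^ ((r:ℂ)))⁻¹ := funext hH
      rw [hfun]
      exact h3.differentiableWithinAt
    exact (hdiff.analyticOnNhd hopen).analyticOn
  · intro z₁ hz₁ z₂ hz₂ h
    have hz₁' : 0 < z₁.im := hz₁
    have hz₂' : 0 < z₂.im := hz₂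
    rw [hH z₁, hH z₂] at h
    have h' := inv_injective h
    have hpow : (1 - 1 / ((r:ℂ)*z₁)) ^ ((r:ℂ)) = (1 - 1 / ((r:ℂ)*z₂)) ^ ((r:ℂ)) := by
      linear_combination -h'
    have hw := aux_inj hr1 hr2 (aux_wim hr0 hz₁') (aux_wim hr0 hz₂') hpow
    have hdiv : 1 / ((r:ℂ)*z₁) = 1 / ((r:ℂ)*z₂) := by linear_combination -hw
    rw [one_div, one_div] at hdiv
    have := inv_injective hdiv
    exact mul_left_cancel₀ (by exact_mod_cast hr0.ne' : (r:ℂ) ≠ 0) this
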